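/- For r > 0 set ψ₁(r) = (Γ(3/2)Γ(3)/Γ(5/2))·tanh(r/2)·₂F₁(−1/2, 1; 5/2; tanh²(r/2)). Then ψ₁(r) = coth(r) − r·csch²(r) = (sinh(r)cosh(r) − r)/sinh²(r). -/

import Mathlib

open Real

/-- The Pochhammer symbol `(a)_n` for a real number `a`. -/
noncomputable def pochR (a : ℝ) (n : ℕ) : ℝ := ∏ k ∈ Finset.range n, (a + k)

/-- The Gauss hypergeometric series coefficient of `₂F₁(a,b;c;·)`. -/
noncomputable def hypCoeff (a b c : ℝ) (n : ℕ) : ℝ :=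
  pochR a n * pochR b n / (pochR c n * (n.factorial : ℝ))

/-- `₂F₁(a, b; c; z)` as a sum of the Gauss hypergeometric series. -/
noncomputable def twoFone (a b c z : ℝ) : ℝ := ∑' n : ℕ, hypCoeff a b c n * z ^ n

lemma pochR_succ (a : ℝ) (n : ℕ) : pochR a (n + 1) = pochR a n * (a + n) := by
  simp [pochR, Finset.prod_range_succ]

lemma pochR_one_eq_factorial (n : ℕ) : pochR 1 n = (n.factorial : ℝ) := by
  induction n with
  | zero => simp [pochR]
  | succ n ih => rw [pochR_succ, ih]; push_cast [Nat.factorial_succ]; ring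

lemma pochR_key (n : ℕ) :
    ((2 * n : ℝ) - 1) * ((2 * n : ℝ) + 1) * ((2 * n : ℝ) + 3) * pochR (-(1/2)) n
      = -3 * pochR (5/2) n := by
  induction n with
  | zero => simp [pochR]
  | succ n ih =>
      rw [pochR_succ, pochR_succ]
      push_cast
      linear_combination ((n : ℝ) + 5/2) * ih

lemma pochR_52_pos (n : ℕ) : 0 < pochR (5/2) n := by
  apply Finset.prod_pos
  intro k _
  positivity

lemma two_n_sub_one_ne (n : ℕ) : (2 * (n : ℝ) - 1) ≠ 0 := by
  cases n with
  | zero => norm_num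
  | succ m =>
      refine ne_of_gt ?_
      push_cast
      have : (0:ℝ) ≤ m := m.cast_nonneg
      linarith

lemma hypCoeff_eq (n : ℕ) :
    hypCoeff (-(1/2)) 1 (5/2) n
      = -3 / ((2 * (n : ℝ) - 1) * (2 * (n : ℝ) + 1) * (2 * (n : ℝ) + 3)) := by
  have h1 := pochR_key n
  have h2 : (0 : ℝ) < pochR (5/2) n := pochR_52_pos n
  have h3 : (2 * (n : ℝ) - 1) ≠ 0 := two_n_sub_one_ne n
  have h4 : (2 * (n : ℝ) + 1) ≠ 0 := by positivity
  have h5 : (2 * (n : ℝ) + 3) ≠ 0 := by positivity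
  have h6 : (n.factorial : ℝ) ≠ 0 := Nat.cast_ne_zero.mpr n.factorial_ne_zero
  rw [hypCoeff, pochR_one_eq_factorial,
    div_eq_div_iff (by positivity) (mul_ne_zero (mul_ne_zero h3 h4) h5)]
  linear_combination (n.factorial : ℝ) * h1

/-- For `r > 0`, the hypergeometric expression
`ψ₁(r) = (Γ(3/2)Γ(3)/Γ(5/2))·tanh(r/2)·₂F₁(−1/2, 1; 5/2; tanh²(r/2))` equals
`coth(r) − r·csch²(r) = (sinh r cosh r − r)/sinh² r`. -/
theorem psi1_closed_form (r : ℝ) (hr : 0 < r) :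
    (Real.Gamma (3/2) * Real.Gamma 3 / Real.Gamma (5/2)) * tanh (r/2) *
        twoFone (-(1/2)) 1 (5/2) (tanh (r/2) ^ 2)
      = cosh r / sinh r - r / (sinh r) ^ 2 ∧
    cosh r / sinh r - r / (sinh r) ^ 2 = (sinh r * cosh r - r) / (sinh r) ^ 2 := by
  constructor
  · set x : ℝ := tanh (r/2) with hxdef
    have hs : 0 < sinh (r/2) := by
      have := Real.sinh_pos_iff (x := r/2)
      exact this.mpr (by linarith)
    have hc : 0 < cosh (r/2) := Real.cosh_pos _
    have hx_eq : x = sinh (r/2) / cosh (r/2) := Real.tanh_eq_sinh_div_cosh _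
    have hx_pos : 0 < x := by rw [hx_eq]; positivity
    have hx_lt : x < 1 := by
      rw [hx_eq, div_lt_one hc]
      nlinarith [Real.cosh_sub_sinh (r/2), Real.exp_pos (-(r/2))]
    have hx_ne : x ≠ 0 := ne_of_gt hx_pos
    have habs : |x| < 1 := by rw [abs_of_pos hx_pos]; exact hx_lt
    have hlog : Real.log (1 + x) - Real.log (1 - x) = r := by
      have h1 : 1 + x = Real.exp (r/2) / cosh (r/2) := by
        rw [hx_eq]
        field_simp
        try linear_combination Real.cosh_add_sinh (r/2)
      have h2 : 1 - x = Real.exp (-(r/2)) / cosh (r/2) := by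
        rw [hx_eq]
        field_simp
        try linear_combination Real.cosh_sub_sinh (r/2)
      rw [h1, h2, Real.log_div (Real.exp_ne_zero _) (ne_of_gt hc),
        Real.log_div (Real.exp_ne_zero _) (ne_of_gt hc), Real.log_exp, Real.log_exp]
      ring
    have h0 := Real.hasSum_log_sub_log_of_abs_lt_one habs
    rw [hlog] at h0
    -- arctanh series
    have h1 : HasSum (fun k : ℕ => x ^ (2 * k + 1) / (2 * (k:ℝ) + 1)) (r / 2) := by
      have h := h0.mul_left (1/2)
      have hf : (fun i : ℕ => (1:ℝ)/2 * (2 * (1 / (2 * (i:ℝ) + 1)) * x ^ (2 * i + 1)))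
          = fun k : ℕ => x ^ (2 * k + 1) / (2 * (k:ℝ) + 1) := by
        funext k
        have hk : (2 * (k : ℝ) + 1) ≠ 0 := by positivity
        field_simp
      rw [hf] at h
      rw [show r / 2 = 1 / 2 * r by ring]
      exact h
    -- B-series
    have hB : HasSum (fun n : ℕ => x ^ (2 * n) / (2 * (n:ℝ) + 1)) (r / (2 * x)) := by
      have h := h1.mul_left (1/x)
      have hf : (fun i : ℕ => (1:ℝ)/x * (x ^ (2 * i + 1) / (2 * (i:ℝ) + 1)))
          = fun n : ℕ => x ^ (2 * n) / (2 * (n:ℝ) + 1) := by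
        funext k
        have hk : (2 * (k : ℝ) + 1) ≠ 0 := by positivity
        rw [pow_succ]
        field_simp
        try ring
      rw [hf] at h
      rw [show r / (2 * x) = 1 / x * (r / 2) by ring]
      exact h
    -- C-series
    have hCshift : HasSum (fun n : ℕ => x ^ (2 * (n+1) + 1) / (2 * ((n:ℝ)+1) + 1))
        (r / 2 - x) := by
      have h := (hasSum_nat_add_iff'
        (f := fun k : ℕ => x ^ (2 * k + 1) / (2 * (k:ℝ) + 1)) 1).mpr h1
      have hf : (fun n : ℕ => x ^ (2 * (n+1) + 1) / (2 * ((n+1 : ℕ):ℝ) + 1))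
          = fun n : ℕ => x ^ (2 * (n+1) + 1) / (2 * ((n:ℝ)+1) + 1) := by
        funext k; push_cast; ring_nf
      rw [hf] at h
      have e : ∑ i ∈ Finset.range 1, x ^ (2 * i + 1) / (2 * (i:ℝ) + 1) = x := by norm_num
      rw [e] at h
      exact h
    have hC : HasSum (fun n : ℕ => x ^ (2 * n) / (2 * (n:ℝ) + 3)) ((r / 2 - x) / x ^ 3) := by
      have h := hCshift.mul_left (1 / x ^ 3)
      have hf : (fun i : ℕ => (1:ℝ)/x^3 * (x ^ (2 * (i+1) + 1) / (2 * ((i:ℝ)+1) + 1)))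
          = fun n : ℕ => x ^ (2 * n) / (2 * (n:ℝ) + 3) := by
        funext k
        have hk : (2 * (k : ℝ) + 3) ≠ 0 := by positivity
        have hp : x ^ (2 * (k+1) + 1) = x ^ (2 * k) * x ^ 3 := by ring
        rw [hp]
        field_simp
        ring
      rw [hf] at h
      rw [show (r / 2 - x) / x ^ 3 = 1 / x ^ 3 * (r / 2 - x) by ring]
      exact h
    -- A-series
    have hAshift : HasSum (fun n : ℕ => x ^ (2 * (n+1)) / (2 * (((n+1 : ℕ)):ℝ) - 1))
        (x * (r / 2)) := by
      have h := h1.mul_left x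
      have hf : (fun i : ℕ => x * (x ^ (2 * i + 1) / (2 * (i:ℝ) + 1)))
          = fun n : ℕ => x ^ (2 * (n+1)) / (2 * (((n+1 : ℕ)):ℝ) - 1) := by
        funext k
        have hk : (2 * (k : ℝ) + 1) ≠ 0 := by positivity
        have hp : x ^ (2 * (k+1)) = x * x ^ (2 * k + 1) := by ring
        push_cast
        rw [show (2 * ((k:ℝ) + 1) - 1) = 2 * (k:ℝ) + 1 by ring, hp]
        ring
      rw [hf] at h
      exact h
    have hA : HasSum (fun n : ℕ => x ^ (2 * n) / (2 * (n:ℝ) - 1)) (x * (r / 2) - 1) := by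
      have h := (hasSum_nat_add_iff
        (f := fun n : ℕ => x ^ (2 * n) / (2 * (n:ℝ) - 1)) 1).mp hAshift
      have e : x * (r / 2) + ∑ i ∈ Finset.range 1, x ^ (2 * i) / (2 * (i:ℝ) - 1)
          = x * (r / 2) - 1 := by
        rw [Finset.sum_range_one]; push_cast; ring
      rw [e] at h
      exact h
    -- combine
    have hcomb := ((hA.mul_left (-(3/8))).add (hB.mul_left (3/4))).add (hC.mul_left (-(3/8)))
    have hfun : (fun n : ℕ =>
        (-(3/8) * (x ^ (2 * n) / (2 * (n:ℝ) - 1)) + 3/4 * (x ^ (2 * n) / (2 * (n:ℝ) + 1)))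
          + -(3/8) * (x ^ (2 * n) / (2 * (n:ℝ) + 3)))
        = fun n : ℕ => hypCoeff (-(1/2)) 1 (5/2) n * (x ^ 2) ^ n := by
      funext n
      rw [hypCoeff_eq n, ← pow_mul]
      have h3 : (2 * (n : ℝ) - 1) ≠ 0 := two_n_sub_one_ne n
      have h4 : (2 * (n : ℝ) + 1) ≠ 0 := by positivity
      have h5 : (2 * (n : ℝ) + 3) ≠ 0 := by positivity
      field_simp
      ring
    rw [hfun] at hcomb
    have htsum : twoFone (-(1/2)) 1 (5/2) (x ^ 2)
        = -(3/8) * (x * (r / 2) - 1) + 3/4 * (r / (2 * x)) + -(3/8) * ((r / 2 - x) / x ^ 3) :=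
      hcomb.tsum_eq
    -- Gamma prefactor
    have hg32 : Real.Gamma (3/2) = (1/2) * Real.sqrt π := by
      rw [show (3/2 : ℝ) = 1/2 + 1 by norm_num, Real.Gamma_add_one (by norm_num),
        Real.Gamma_one_half_eq]
    have hg52 : Real.Gamma (5/2) = (3/2) * ((1/2) * Real.sqrt π) := by
      rw [show (5/2 : ℝ) = 3/2 + 1 by norm_num, Real.Gamma_add_one (by norm_num), hg32]
    have hg3 : Real.Gamma 3 = 2 := by
      rw [show (3 : ℝ) = 2 + 1 by norm_num, Real.Gamma_add_one (by norm_num),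
        show (2 : ℝ) = 1 + 1 by norm_num, Real.Gamma_add_one (by norm_num), Real.Gamma_one]
      norm_num
    have hsqrtpi : Real.sqrt π ≠ 0 := by positivity
    have hpre : Real.Gamma (3/2) * Real.Gamma 3 / Real.Gamma (5/2) = 4/3 := by
      rw [hg32, hg52, hg3]
      field_simp
      ring
    rw [hpre, htsum]
    -- final algebra
    have hsinh : sinh r = 2 * sinh (r/2) * cosh (r/2) := by
      have h := Real.sinh_two_mul (r/2)
      rw [show 2 * (r/2) = r by ring] at h
      exact h
    have hcosh : cosh r = cosh (r/2) ^ 2 + sinh (r/2) ^ 2 := by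
      have h := Real.cosh_two_mul (r/2)
      rw [show 2 * (r/2) = r by ring] at h
      exact h
    have hid := Real.cosh_sq_sub_sinh_sq (r/2)
    rw [hsinh, hcosh, hx_eq]
    have hsne : sinh (r/2) ≠ 0 := ne_of_gt hs
    have hcne : cosh (r/2) ≠ 0 := ne_of_gt hc
    field_simp
    linear_combination (-8 * r * (Real.cosh (r/2)^2 - Real.sinh (r/2)^2 + 1)) * hid
  · have hsr : 0 < sinh r := by
      have := Real.sinh_pos_iff (x := r)
      exact this.mpr hr
    have hs : sinh r ≠ 0 := ne_of_gt hsr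
    field_simp
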